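/- arXiv:1611.06016 — 2 statements merged into one kernel-verified Lean document; each statement's English description precedes it below -/
import Mathlib

section
/- Let θ : ℝ^d × ℝ^d → ℂ be a scalar 2-cocycle. Then there exists a function λ : ℝ^d → ℂ with |λ(x)| = 1, λ(0) = 1, λ(−x) = λ(x) and λ(x)² = θ(x,−x) for all x ∈ ℝ^d (for instance a pointwise square root of x ↦ θ(x,−x)), such that the cohomologous cocycle θ̃(x,y) := θ(x,y)·λ(x+y)·λ(x)⁻¹·λ(y)⁻¹ satisfies θ̃(x,−x) = 1 for all x ∈ ℝ^d. -/
/-- Every scalar 2-cocycle `θ` on `ℝ^d` is cohomologous to a cocycle `θ̃`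
with `θ̃(x,−x) = 1`: there is a unit-modulus function `λ` with `λ(0) = 1`, `λ(−x) = λ(x)`
and `λ(x)² = θ(x,−x)`, such that `θ̃(x,y) = θ(x,y)·λ(x+y)·λ(x)⁻¹·λ(y)⁻¹` satisfies
`θ̃(x,−x) = 1` for all `x`. -/
theorem scalar_cocycle_cohomologous_trivial_on_antidiagonal (d : ℕ)
    (θ : EuclideanSpace ℝ (Fin d) → EuclideanSpace ℝ (Fin d) → ℂ)
    (hunit : ∀ x y, ‖θ x y‖ = 1)
    (hcoc : ∀ x y z, θ x y * θ (x + y) z = θ y z * θ x (y + z))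
    (hnorm : ∀ x, θ x 0 = 1 ∧ θ 0 x = 1) :
    ∃ lam : EuclideanSpace ℝ (Fin d) → ℂ,
      (∀ x, ‖lam x‖ = 1) ∧
      lam 0 = 1 ∧
      (∀ x, lam (-x) = lam x) ∧
      (∀ x, (lam x) ^ 2 = θ x (-x)) ∧
      (∀ x, θ x (-x) * lam (x + -x) * (lam x)⁻¹ * (lam (-x))⁻¹ = 1) := by
  -- symmetry: θ(x,-x) = θ(-x,x)
  have hsym : ∀ x, θ x (-x) = θ (-x) x := by
    intro x
    have h := hcoc x (-x) x
    simp only [add_neg_cancel, neg_add_cancel, (hnorm x).1, (hnorm x).2] at h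
    linear_combination h
  set lam : EuclideanSpace ℝ (Fin d) → ℂ := fun x => θ x (-x) ^ (((2:ℕ):ℂ)⁻¹) with hlam
  have hsq : ∀ x, (lam x) ^ 2 = θ x (-x) := by
    intro x
    exact Complex.cpow_nat_inv_pow _ two_ne_zero
  have habs : ∀ x, ‖lam x‖ = 1 := by
    intro x
    have : (((2:ℕ):ℂ))⁻¹ = (((2:ℝ)⁻¹ : ℝ) : ℂ) := by push_cast; ring
    rw [hlam]
    simp only [this, Complex.norm_cpow_real, hunit, Real.one_rpow]
  have heven : ∀ x, lam (-x) = lam x := by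
    intro x
    simp only [hlam, neg_neg, hsym x]
  have hzero : lam 0 = 1 := by
    simp only [hlam, neg_zero, (hnorm 0).1, Complex.one_cpow]
  refine ⟨lam, habs, hzero, heven, hsq, fun x => ?_⟩
  have hne : lam x ≠ 0 := by
    intro h
    have := habs x
    rw [h] at this
    simp at this
  rw [add_neg_cancel, hzero, heven x, ← hsq x]
  field_simp
end

section
/- Let d be a positive integer, m a natural number, s a real number with s > d, θ : ℝ^d × ℝ^d → ℂ measurable with |θ(x,y)| = 1 for all x,y, and f : ℝ^d → ℂ continuous with compact support. Define the kernel k_m(x,y) = θ(x,y)·(‖x‖−‖y‖)^m·f(x−y)·(1+‖y‖²)^{−s/4} on ℝ^d × ℝ^d. Then ∫∫ |k_m(x,y)|² dx dy ≤ C_s·∫_{ℝ^d} ‖u‖^{2m}·|f(u)|² du < ∞, where C_s = ∫_{ℝ^d} (1+‖v‖²)^{−s/2} dv. In particular k_m is square integrable and the corresponding integral operator on L²(ℝ^d) is Hilbert–Schmidt. -/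
set_option maxHeartbeats 1000000


open MeasureTheory

/-- For `s > d`, `m ∈ ℕ`, a unit-modulus measurable twist `θ` and a compactly
supported continuous `f`, the kernel `k_m(x,y) = θ(x,y)·(‖x‖−‖y‖)^m·f(x−y)·(1+‖y‖²)^{−s/4}`
satisfies `∫∫ |k_m(x,y)|² dx dy ≤ C_s·∫ ‖u‖^{2m}·|f(u)|² du` with
`C_s = ∫ (1+‖v‖²)^{−s/2} dv`, and in particular `k_m` is square integrable (the corresponding
integral operator on `L²(ℝ^d)` is Hilbert–Schmidt). -/
theorem kernel_deriv_hilbertSchmidt (d : ℕ) (hd : 0 < d) (m : ℕ) (s : ℝ) (hs : (d : ℝ) < s)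
    (θ : EuclideanSpace ℝ (Fin d) → EuclideanSpace ℝ (Fin d) → ℂ)
    (hθmeas : Measurable fun p : EuclideanSpace ℝ (Fin d) × EuclideanSpace ℝ (Fin d) =>
      θ p.1 p.2)
    (hθunit : ∀ x y, ‖θ x y‖ = 1)
    (f : EuclideanSpace ℝ (Fin d) → ℂ) (hfc : Continuous f) (hfs : HasCompactSupport f) :
    -- the double integral bound
    (∫ y : EuclideanSpace ℝ (Fin d), ∫ x : EuclideanSpace ℝ (Fin d),
        ‖θ x y * (((‖x‖ - ‖y‖) ^ m : ℝ) : ℂ) * f (x - y) *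
          (((1 + ‖y‖ ^ 2) ^ (-s / 4) : ℝ) : ℂ)‖ ^ 2)
      ≤ (∫ v : EuclideanSpace ℝ (Fin d), (1 + ‖v‖ ^ 2) ^ (-s / 2)) *
        ∫ u : EuclideanSpace ℝ (Fin d), ‖u‖ ^ (2 * m) * ‖f u‖ ^ 2 ∧
    -- the right-hand side is finite
    Integrable (fun u : EuclideanSpace ℝ (Fin d) => ‖u‖ ^ (2 * m) * ‖f u‖ ^ 2) volume ∧
    -- square integrability of the kernel: the integral operator is Hilbert–Schmidt
    MemLp
      (fun p : EuclideanSpace ℝ (Fin d) × EuclideanSpace ℝ (Fin d) =>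
        θ p.1 p.2 * (((‖p.1‖ - ‖p.2‖) ^ m : ℝ) : ℂ) * f (p.1 - p.2) *
          (((1 + ‖p.2‖ ^ 2) ^ (-s / 4) : ℝ) : ℂ)) 2 volume := by
  -- the profile function φ
  set φ : EuclideanSpace ℝ (Fin d) → ℝ := fun u => ‖u‖ ^ (2 * m) * ‖f u‖ ^ 2 with hφ
  -- integrability of φ (continuous compactly supported)
  have hφc : Continuous φ := ((continuous_norm.pow (2*m)).mul ((hfc.norm).pow 2))
  have hφsupp : HasCompactSupport φ := by
    have h2 : HasCompactSupport fun u => ‖f u‖ ^ 2 :=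
      hfs.comp_left (g := fun z : ℂ => ‖z‖ ^ 2) (by simp)
    exact h2.mul_left
  have hA : Integrable φ volume := hφc.integrable_of_hasCompactSupport hφsupp
  -- integrability of the Japanese bracket
  have hfin : (Module.finrank ℝ (EuclideanSpace ℝ (Fin d)) : ℝ) < s := by
    rwa [finrank_euclideanSpace, Fintype.card_fin]
  have hg : Integrable (fun y : EuclideanSpace ℝ (Fin d) => (1 + ‖y‖ ^ 2) ^ (-s / 2)) volume :=
    integrable_rpow_neg_one_add_norm_sq hfin
  have hbase : ∀ y : EuclideanSpace ℝ (Fin d), (0 : ℝ) ≤ 1 + ‖y‖ ^ 2 := fun y => by positivity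
  have hgnn : ∀ y : EuclideanSpace ℝ (Fin d), (0 : ℝ) ≤ (1 + ‖y‖ ^ 2) ^ (-s / 2) := fun y =>
    Real.rpow_nonneg (hbase y) _
  have hsq : ∀ y : EuclideanSpace ℝ (Fin d), ((1 + ‖y‖ ^ 2) ^ (-s / 4)) ^ 2 = (1 + ‖y‖ ^ 2) ^ (-s / 2) := by
    intro y
    rw [← Real.rpow_natCast ((1 + ‖y‖ ^ 2) ^ (-s / 4)) 2, ← Real.rpow_mul (hbase y)]
    congr 1
    ring
  -- pointwise norm computation
  have hnorm : ∀ x y : EuclideanSpace ℝ (Fin d),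
      ‖θ x y * (((‖x‖ - ‖y‖) ^ m : ℝ) : ℂ) * f (x - y) *
          (((1 + ‖y‖ ^ 2) ^ (-s / 4) : ℝ) : ℂ)‖ ^ 2
        = |‖x‖ - ‖y‖| ^ (2 * m) * ‖f (x - y)‖ ^ 2 * (1 + ‖y‖ ^ 2) ^ (-s / 2) := by
    intro x y
    rw [norm_mul, norm_mul, norm_mul, hθunit, one_mul,
      Complex.norm_real, Complex.norm_real, Real.norm_eq_abs, Real.norm_eq_abs,
      abs_pow, abs_of_nonneg (Real.rpow_nonneg (hbase y) _), mul_pow, mul_pow, hsq y,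
      ← pow_mul, mul_comm m 2]
  -- the key pointwise bound
  have hkey : ∀ x y : EuclideanSpace ℝ (Fin d),
      |‖x‖ - ‖y‖| ^ (2 * m) * ‖f (x - y)‖ ^ 2 * (1 + ‖y‖ ^ 2) ^ (-s / 2)
        ≤ φ (x - y) * (1 + ‖y‖ ^ 2) ^ (-s / 2) := by
    intro x y
    refine mul_le_mul_of_nonneg_right (mul_le_mul_of_nonneg_right ?_ (by positivity))
      (hgnn y)
    exact pow_le_pow_left₀ (abs_nonneg _) (abs_norm_sub_norm_le x y) _
  -- integrability of the comparison function on the product space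
  have hGprod : Integrable (fun q : EuclideanSpace ℝ (Fin d) × EuclideanSpace ℝ (Fin d) => φ q.1 * (1 + ‖q.2‖ ^ 2) ^ (-s / 2))
      (volume.prod volume) := hA.mul_prod hg
  have hmp : MeasurePreserving (fun p : EuclideanSpace ℝ (Fin d) × EuclideanSpace ℝ (Fin d) => (p.1 - p.2, p.2))
      ((volume : Measure (EuclideanSpace ℝ (Fin d))).prod volume) ((volume : Measure (EuclideanSpace ℝ (Fin d))).prod volume) :=
    measurePreserving_sub_prod volume volume
  have hG : Integrable (fun p : EuclideanSpace ℝ (Fin d) × EuclideanSpace ℝ (Fin d) => φ (p.1 - p.2) * (1 + ‖p.2‖ ^ 2) ^ (-s / 2))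
      (volume.prod volume) := by
    have := (hmp.integrable_comp hGprod.aestronglyMeasurable).2 hGprod
    simpa [Function.comp_def] using this
  have hvol : (volume : Measure (EuclideanSpace ℝ (Fin d) × EuclideanSpace ℝ (Fin d))) = (volume : Measure (EuclideanSpace ℝ (Fin d))).prod volume :=
    Measure.volume_eq_prod _ _
  -- measurability of the kernel
  have hrpow : Continuous fun y : EuclideanSpace ℝ (Fin d) => ((1 + ‖y‖ ^ 2) ^ (-s / 4) : ℝ) := by
    apply Continuous.rpow_const (by fun_prop)
    intro y
    left
    positivity
  have hKmeas : AEStronglyMeasurable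
      (fun p : EuclideanSpace ℝ (Fin d) × EuclideanSpace ℝ (Fin d) =>
        θ p.1 p.2 * (((‖p.1‖ - ‖p.2‖) ^ m : ℝ) : ℂ) * f (p.1 - p.2) *
          (((1 + ‖p.2‖ ^ 2) ^ (-s / 4) : ℝ) : ℂ)) volume := by
    refine Measurable.aestronglyMeasurable ?_
    refine (((hθmeas.mul ?_).mul ?_).mul ?_)
    · exact (Complex.continuous_ofReal.comp
        (((continuous_norm.comp continuous_fst).sub
          (continuous_norm.comp continuous_snd)).pow m)).measurable
    · exact (hfc.comp (continuous_fst.sub continuous_snd)).measurable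
    · exact (Complex.continuous_ofReal.comp (hrpow.comp continuous_snd)).measurable
  -- square-integrability of the kernel
  have hK2 : Integrable (fun p : EuclideanSpace ℝ (Fin d) × EuclideanSpace ℝ (Fin d) =>
      ‖θ p.1 p.2 * (((‖p.1‖ - ‖p.2‖) ^ m : ℝ) : ℂ) * f (p.1 - p.2) *
        (((1 + ‖p.2‖ ^ 2) ^ (-s / 4) : ℝ) : ℂ)‖ ^ 2) volume := by
    rw [hvol]
    refine hG.mono' ?_ (Filter.Eventually.of_forall fun p => ?_)
    · exact ((hKmeas.norm.pow 2).mono_measure (le_of_eq hvol.symm))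
    · rw [Real.norm_eq_abs, abs_of_nonneg (by positivity), hnorm p.1 p.2]
      exact hkey p.1 p.2
  refine ⟨?_, hA, ?_⟩
  · -- the double integral bound
    calc (∫ y : EuclideanSpace ℝ (Fin d), ∫ x : EuclideanSpace ℝ (Fin d),
          ‖θ x y * (((‖x‖ - ‖y‖) ^ m : ℝ) : ℂ) * f (x - y) *
            (((1 + ‖y‖ ^ 2) ^ (-s / 4) : ℝ) : ℂ)‖ ^ 2)
        ≤ ∫ y : EuclideanSpace ℝ (Fin d), (1 + ‖y‖ ^ 2) ^ (-s / 2) * ∫ u : EuclideanSpace ℝ (Fin d), φ u := by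
          refine integral_mono_of_nonneg
            (Filter.Eventually.of_forall fun y => integral_nonneg fun x => by positivity)
            (hg.mul_const _) (Filter.Eventually.of_forall fun y => ?_)
          -- fix y, bound the inner integral
          have hint : Integrable (fun x : EuclideanSpace ℝ (Fin d) => φ (x - y) * (1 + ‖y‖ ^ 2) ^ (-s / 2))
              volume := (hA.comp_sub_right y).mul_const _
          calc (∫ x : EuclideanSpace ℝ (Fin d), ‖θ x y * (((‖x‖ - ‖y‖) ^ m : ℝ) : ℂ) * f (x - y) *
                (((1 + ‖y‖ ^ 2) ^ (-s / 4) : ℝ) : ℂ)‖ ^ 2)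
              ≤ ∫ x : EuclideanSpace ℝ (Fin d), φ (x - y) * (1 + ‖y‖ ^ 2) ^ (-s / 2) := by
                refine integral_mono_of_nonneg
                  (Filter.Eventually.of_forall fun x => by positivity) hint
                  (Filter.Eventually.of_forall fun x => ?_)
                dsimp only
                rw [hnorm x y]
                exact hkey x y
            _ = (∫ x : EuclideanSpace ℝ (Fin d), φ (x - y)) * (1 + ‖y‖ ^ 2) ^ (-s / 2) := by
                rw [integral_mul_const]
            _ = (1 + ‖y‖ ^ 2) ^ (-s / 2) * ∫ u : EuclideanSpace ℝ (Fin d), φ u := by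
                rw [integral_sub_right_eq_self φ y, mul_comm]
      _ = (∫ v : EuclideanSpace ℝ (Fin d), (1 + ‖v‖ ^ 2) ^ (-s / 2)) * ∫ u : EuclideanSpace ℝ (Fin d), φ u := by
          rw [integral_mul_const]
  · -- Memℒp 2
    exact (memLp_two_iff_integrable_sq_norm hKmeas).2 hK2
end
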